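/- Let l, k ≥ 1 be integers, let X_l(θ) = cos(lθ) and Y_k(θ) = sin(kθ), acting on H by X.u = −u'·X + (1/2π)∫₀^{2π}u'(θ)X(θ)dθ. Then for all nonzero integers m, n: (X_l.ẽ_n, ẽ_m)_ω = s(m,n)·(1/2)·√(|mn|)·(δ_{m−n,l} + δ_{n−m,l}) and (Y_k.ẽ_n, ẽ_m)_ω = (−i)·s(m,n)·(1/2)·√(|mn|)·(δ_{m−n,k} − δ_{n−m,k}), where s(m,n) = −i if m,n > 0; s(m,n) = 1 if m and n have opposite signs; s(m,n) = i if m,n < 0. -/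

import Mathlib

open MeasureTheory

/-- The `n`-th Fourier coefficient of a `2π`-periodic function `f : ℝ → ℂ`. -/
noncomputable def fourierCoef (f : ℝ → ℂ) (n : ℤ) : ℂ :=
  (1 / (2 * Real.pi)) * ∫ θ in (0:ℝ)..(2 * Real.pi),
    f θ * Complex.exp (-(Complex.I) * (n : ℂ) * (θ : ℂ))

/-- The `H^{1/2}` inner product `(f,g)_ω = Σ_{n≠0} |n|·f̂(n)·conj(ĝ(n))`. -/
noncomputable def ipOmega (f g : ℝ → ℂ) : ℂ :=
  ∑' n : ℤ, ((|n| : ℤ) : ℂ) * fourierCoef f n * (starRingEnd ℂ) (fourierCoef g n)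

/-- The orthonormal basis functions `ẽ_n`: `ẽ_n(θ) = e^{inθ}/√n` for `n > 0` and
`ẽ_n(θ) = e^{inθ}/(i√|n|)` for `n < 0`. -/
noncomputable def etld (n : ℤ) : ℝ → ℂ := fun θ =>
  if 0 < n then Complex.exp (Complex.I * (n : ℂ) * (θ : ℂ)) / (Real.sqrt n : ℝ)
  else Complex.exp (Complex.I * (n : ℂ) * (θ : ℂ)) / (Complex.I * (Real.sqrt |(n : ℝ)| : ℝ))

/-- The action of a smooth real vector field `X` on `u ∈ H`:
`X.u = −u'·X + (1/2π)∫₀^{2π} u'(θ)X(θ) dθ`. -/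
noncomputable def fieldAct (X : ℝ → ℝ) (u : ℝ → ℂ) : ℝ → ℂ := fun θ =>
  -(deriv u θ * (X θ : ℝ)) +
    (1 / (2 * Real.pi) : ℂ) * ∫ t in (0:ℝ)..(2 * Real.pi), deriv u t * (X t : ℝ)

/-- The sign factor `s(m,n)`: `−i` if `m,n > 0`; `i` if `m,n < 0`; `1` otherwise. -/
noncomputable def sFactor (m n : ℤ) : ℂ :=
  if 0 < m ∧ 0 < n then -Complex.I else if m < 0 ∧ n < 0 then Complex.I else 1

noncomputable def E (p : ℤ) : ℝ → ℂ := fun θ => Complex.exp (Complex.I * p * θ)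

noncomputable def dcoef (n : ℤ) : ℂ :=
  if 0 < n then ((Real.sqrt n : ℝ) : ℂ) else Complex.I * ((Real.sqrt |(n : ℝ)| : ℝ) : ℂ)

lemma dcoef_ne_zero (n : ℤ) (hn : n ≠ 0) : dcoef n ≠ 0 := by
  unfold dcoef
  split_ifs with h
  · simp only [ne_eq, Complex.ofReal_eq_zero]
    positivity
  · have h2 : (0:ℝ) < |(n:ℝ)| := by
      simp only [abs_pos, ne_eq, Int.cast_eq_zero]; exact hn
    simp only [ne_eq, mul_eq_zero, Complex.I_ne_zero, Complex.ofReal_eq_zero, false_or]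
    positivity

lemma etld_eq (n : ℤ) : etld n = fun θ => (1 / dcoef n) * E n θ := by
  funext θ
  by_cases h : 0 < n <;> simp [etld, dcoef, E, h, div_eq_mul_inv, mul_comm]

lemma hasDerivAt_E (p : ℤ) (θ : ℝ) :
    HasDerivAt (E p) (Complex.I * p * E p θ) θ := by
  have h1 : HasDerivAt (fun t : ℝ => ((t : ℂ))) 1 θ := Complex.ofRealCLM.hasDerivAt
  have h2 := (h1.const_mul (Complex.I * p)).cexp
  convert h2 using 1
  · rfl
  simp [E]; ring

lemma continuous_E (p : ℤ) : Continuous (E p) := by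
  unfold E; fun_prop

lemma deriv_etld (n : ℤ) (θ : ℝ) :
    deriv (etld n) θ = (Complex.I * n / dcoef n) * E n θ := by
  rw [etld_eq]
  have h := ((hasDerivAt_E n θ).const_mul (1 / dcoef n)).deriv
  rw [h]; ring

lemma E_mul (p j : ℤ) (θ : ℝ) :
    E p θ * Complex.exp (-(Complex.I) * j * θ) = E (p - j) θ := by
  simp only [E, ← Complex.exp_add]
  congr 1; push_cast; ring

lemma E_add (p q : ℤ) (θ : ℝ) : E p θ * E q θ = E (p + q) θ := by
  simp only [E, ← Complex.exp_add]
  congr 1; push_cast; ring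

lemma integral_E (p : ℤ) :
    ∫ θ in (0:ℝ)..(2 * Real.pi), E p θ = if p = 0 then (2 * Real.pi : ℂ) else 0 := by
  rcases eq_or_ne p 0 with h | h
  · simp [E, h]
  · rw [if_neg h]
    have hc : (Complex.I * p) ≠ 0 := by
      simp [Complex.I_ne_zero, Complex.ext_iff] at *
      exact_mod_cast h
    have hI := integral_exp_mul_complex (a := 0) (b := 2 * Real.pi) hc
    simp only [E]
    rw [hI]
    have h1 : Complex.I * p * (2 * Real.pi : ℝ) = (p : ℂ) * (2 * Real.pi * Complex.I) := by
      push_cast; ring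
    rw [h1, Complex.exp_int_mul_two_pi_mul_I]
    simp

lemma fourierCoef_comb (a b c : ℂ) (p q j : ℤ) :
    fourierCoef (fun θ => -(a * E p θ + b * E q θ) + c) j
      = -(a * (if p = j then 1 else 0) + b * (if q = j then 1 else 0))
        + c * (if j = 0 then 1 else 0) := by
  have hint : ∀ r : ℤ, IntervalIntegrable (fun θ => E r θ * Complex.exp (-(Complex.I) * j * θ))
      volume 0 (2 * Real.pi) := by
    intro r
    apply Continuous.intervalIntegrable
    exact (continuous_E r).mul (by fun_prop)
  have hfun : ∀ θ : ℝ, (-(a * E p θ + b * E q θ) + c) * Complex.exp (-(Complex.I) * j * θ)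
      = -(a * (E p θ * Complex.exp (-(Complex.I) * j * θ))
          + b * (E q θ * Complex.exp (-(Complex.I) * j * θ)))
        + c * (E 0 θ * Complex.exp (-(Complex.I) * j * θ)) := by
    intro θ
    have h0 : E 0 θ = 1 := by simp [E]
    rw [h0]; ring
  unfold fourierCoef
  rw [intervalIntegral.integral_congr (g := fun θ =>
      -(a * (E p θ * Complex.exp (-(Complex.I) * j * θ))
          + b * (E q θ * Complex.exp (-(Complex.I) * j * θ)))
        + c * (E 0 θ * Complex.exp (-(Complex.I) * j * θ))) (fun θ _ => hfun θ)]
  rw [intervalIntegral.integral_add (by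
        exact (((hint p).const_mul a).add ((hint q).const_mul b)).neg) ((hint 0).const_mul c)]
  rw [intervalIntegral.integral_neg,
      intervalIntegral.integral_add ((hint p).const_mul a) ((hint q).const_mul b),
      intervalIntegral.integral_const_mul, intervalIntegral.integral_const_mul,
      intervalIntegral.integral_const_mul]
  have hE : ∀ r : ℤ, (∫ θ in (0:ℝ)..(2 * Real.pi), E r θ * Complex.exp (-(Complex.I) * j * θ))
      = if r - j = 0 then (2 * Real.pi : ℂ) else 0 := by
    intro r
    rw [intervalIntegral.integral_congr (g := E (r - j)) (fun θ _ => E_mul r j θ)]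
    exact integral_E (r - j)
  rw [hE p, hE q, hE 0]
  have hpi : (2 * (Real.pi : ℂ)) ≠ 0 := by
    simp [Real.pi_ne_zero, Complex.ext_iff]
  have hiff1 : p - j = 0 ↔ p = j := by omega
  have hiff2 : q - j = 0 ↔ q = j := by omega
  have hiff3 : (0:ℤ) - j = 0 ↔ j = 0 := by omega
  simp only [hiff1, hiff2, hiff3]
  split_ifs <;> field_simp <;> ring

lemma fourierCoef_etld (m j : ℤ) :
    fourierCoef (etld m) j = (1 / dcoef m) * (if m = j then 1 else 0) := by
  unfold fourierCoef
  rw [etld_eq]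
  simp only [mul_assoc (1 / dcoef m)]
  rw [intervalIntegral.integral_const_mul]
  rw [intervalIntegral.integral_congr (g := E (m - j)) (fun θ _ => E_mul m j θ)]
  rw [integral_E (m - j)]
  have hpi : (2 * (Real.pi : ℂ)) ≠ 0 := by
    simp [Real.pi_ne_zero, Complex.ext_iff]
  have hiff : m - j = 0 ↔ m = j := by omega
  simp only [hiff]
  split_ifs <;> field_simp <;> simp

lemma master (X : ℝ → ℝ) (n m : ℤ) (a b : ℂ) (p q : ℤ) (hm : m ≠ 0)
    (hprod : ∀ θ : ℝ, deriv (etld n) θ * ((X θ : ℝ) : ℂ) = a * E p θ + b * E q θ) :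
    ipOmega (fieldAct X (etld n)) (etld m)
      = -(((|m| : ℤ) : ℂ)) * (a * (if p = m then 1 else 0) + b * (if q = m then 1 else 0))
        * (starRingEnd ℂ) (1 / dcoef m) := by
  set C : ℂ := (1 / (2 * Real.pi) : ℂ) * ∫ t in (0:ℝ)..(2 * Real.pi),
      deriv (etld n) t * ((X t : ℝ) : ℂ) with hC
  have hact : fieldAct X (etld n) = fun θ => -(a * E p θ + b * E q θ) + C := by
    funext θ
    simp only [fieldAct, hC]
    rw [hprod θ]
  rw [hact]
  unfold ipOmega
  rw [tsum_eq_single m]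
  · rw [fourierCoef_comb, fourierCoef_etld, if_pos rfl, if_neg hm]
    ring
  · intro j hj
    rw [fourierCoef_etld, if_neg (fun h => hj h.symm)]
    simp

lemma cos_E (l : ℤ) (θ : ℝ) :
    ((Real.cos ((l : ℝ) * θ) : ℝ) : ℂ) = (E l θ + E (-l) θ) / 2 := by
  rw [Complex.ofReal_cos, Complex.cos]
  simp only [E]
  rw [div_eq_div_iff (by norm_num) (by norm_num)]
  have h1 : Complex.I * ((l:ℤ) : ℂ) * θ = ((((l:ℝ) * θ : ℝ)) : ℂ) * Complex.I := by
    push_cast; ring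
  have h2 : Complex.I * (((-l):ℤ) : ℂ) * θ = -((((l:ℝ) * θ : ℝ)) : ℂ) * Complex.I := by
    push_cast; ring
  rw [h1, h2]
  try ring

lemma sin_E (l : ℤ) (θ : ℝ) :
    ((Real.sin ((l : ℝ) * θ) : ℝ) : ℂ) = (E l θ - E (-l) θ) / (2 * Complex.I) := by
  rw [Complex.ofReal_sin, Complex.sin]
  simp only [E]
  rw [div_eq_div_iff (by norm_num) (by simp [Complex.I_ne_zero])]
  have h1 : Complex.I * ((l:ℤ) : ℂ) * θ = ((((l:ℝ) * θ : ℝ)) : ℂ) * Complex.I := by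
    push_cast; ring
  have h2 : Complex.I * (((-l):ℤ) : ℂ) * θ = -((((l:ℝ) * θ : ℝ)) : ℂ) * Complex.I := by
    push_cast; ring
  rw [h1, h2]
  linear_combination (2 * Complex.exp (-(((l:ℝ) * θ : ℝ) : ℂ) * Complex.I)
    - 2 * Complex.exp ((((l:ℝ) * θ : ℝ) : ℂ) * Complex.I)) * Complex.I_sq

lemma core_cos (m n : ℤ) (hm : m ≠ 0) (hn : n ≠ 0) :
    -(((|m| : ℤ) : ℂ)) * (Complex.I * n / (2 * dcoef n)) * (starRingEnd ℂ) (1 / dcoef m)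
      = sFactor m n * (1 / 2 : ℂ) * ((Real.sqrt |((m * n : ℤ) : ℝ)| : ℝ) : ℂ) := by
  set rm := Real.sqrt |(m : ℝ)| with hrm
  set rn := Real.sqrt |(n : ℝ)| with hrn
  have hrm0 : rm ≠ 0 := by rw [hrm]; positivity
  have hrn0 : rn ≠ 0 := by rw [hrn]; positivity
  have hrm0' : (rm : ℂ) ≠ 0 := by exact_mod_cast hrm0
  have hrn0' : (rn : ℂ) ≠ 0 := by exact_mod_cast hrn0
  have hrm2 : rm * rm = |(m : ℝ)| := Real.mul_self_sqrt (abs_nonneg _)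
  have hrn2 : rn * rn = |(n : ℝ)| := Real.mul_self_sqrt (abs_nonneg _)
  have hsq : (Real.sqrt |((m * n : ℤ) : ℝ)| : ℝ) = rm * rn := by
    push_cast
    rw [abs_mul, Real.sqrt_mul (abs_nonneg _)]
  have habs : ((|m| : ℤ) : ℂ) = ((rm : ℂ) * rm) := by
    have h : ((|m| : ℤ) : ℝ) = rm * rm := by rw [hrm2, Int.cast_abs]
    rw [show ((|m|:ℤ):ℂ) = (((|m|:ℤ):ℝ):ℂ) from by norm_cast, h, Complex.ofReal_mul]
  rw [hsq, habs]
  rcases lt_or_gt_of_ne hm with hm' | hm' <;> rcases lt_or_gt_of_ne hn with hn' | hn'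
  · -- m < 0, n < 0
    have h3 : ((n:ℤ) : ℂ) = -((rn : ℂ) * rn) := by
      have hr : (n:ℝ) = -(rn * rn) := by
        rw [hrn2]; rw [abs_of_neg (by exact_mod_cast hn' : (n:ℝ) < 0)]; ring
      calc ((n:ℤ) : ℂ) = (((n:ℝ)) : ℂ) := by push_cast; ring
      _ = _ := by rw [hr]; push_cast; ring
    simp only [dcoef, if_neg (by omega : ¬ (0:ℤ) < n), if_neg (by omega : ¬ (0:ℤ) < m),
      sFactor, if_neg (show ¬ (0 < m ∧ 0 < n) by omega),
      if_pos (show m < 0 ∧ n < 0 from ⟨hm', hn'⟩), ← hrm, ← hrn]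
    rw [h3]
    simp only [map_div₀, map_one, map_mul, Complex.conj_I, Complex.conj_ofReal]
    field_simp
    push_cast
    ring_nf
    linear_combination (-(rm:ℂ) * rn) * Complex.I_sq
  · -- m < 0, n > 0
    have h3 : ((n:ℤ) : ℂ) = ((rn : ℂ) * rn) := by
      have hr : (n:ℝ) = rn * rn := by
        rw [hrn2]; rw [abs_of_pos (by exact_mod_cast hn' : (0:ℝ) < (n:ℝ))]
      calc ((n:ℤ) : ℂ) = (((n:ℝ)) : ℂ) := by push_cast; ring
      _ = _ := by rw [hr]; push_cast; ring
    have hdn : dcoef n = (rn : ℂ) := by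
      simp only [dcoef, if_pos hn', hrn, abs_of_pos (by exact_mod_cast hn' : (0:ℝ) < (n:ℝ))]
    rw [hdn, h3]
    simp only [dcoef, if_neg (by omega : ¬ (0:ℤ) < m),
      sFactor, if_neg (show ¬ (0 < m ∧ 0 < n) by omega),
      if_neg (show ¬ (m < 0 ∧ n < 0) by omega), ← hrm]
    simp only [map_div₀, map_one, map_mul, Complex.conj_I, Complex.conj_ofReal]
    field_simp
    ring_nf
    norm_cast
  · -- m > 0, n < 0
    have h3 : ((n:ℤ) : ℂ) = -((rn : ℂ) * rn) := by
      have hr : (n:ℝ) = -(rn * rn) := by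
        rw [hrn2]; rw [abs_of_neg (by exact_mod_cast hn' : (n:ℝ) < 0)]; ring
      calc ((n:ℤ) : ℂ) = (((n:ℝ)) : ℂ) := by push_cast; ring
      _ = _ := by rw [hr]; push_cast; ring
    have hdm : dcoef m = (rm : ℂ) := by
      simp only [dcoef, if_pos hm', hrm, abs_of_pos (by exact_mod_cast hm' : (0:ℝ) < (m:ℝ))]
    rw [hdm, h3]
    simp only [dcoef, if_neg (by omega : ¬ (0:ℤ) < n),
      sFactor, if_neg (show ¬ (0 < m ∧ 0 < n) by omega),
      if_neg (show ¬ (m < 0 ∧ n < 0) by omega), ← hrn]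
    simp only [map_div₀, map_one, map_mul, Complex.conj_I, Complex.conj_ofReal]
    field_simp
    ring_nf
    norm_cast
  · -- m > 0, n > 0
    have h3 : ((n:ℤ) : ℂ) = ((rn : ℂ) * rn) := by
      have hr : (n:ℝ) = rn * rn := by
        rw [hrn2]; rw [abs_of_pos (by exact_mod_cast hn' : (0:ℝ) < (n:ℝ))]
      calc ((n:ℤ) : ℂ) = (((n:ℝ)) : ℂ) := by push_cast; ring
      _ = _ := by rw [hr]; push_cast; ring
    have hdn : dcoef n = (rn : ℂ) := by
      simp only [dcoef, if_pos hn', hrn, abs_of_pos (by exact_mod_cast hn' : (0:ℝ) < (n:ℝ))]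
    have hdm : dcoef m = (rm : ℂ) := by
      simp only [dcoef, if_pos hm', hrm, abs_of_pos (by exact_mod_cast hm' : (0:ℝ) < (m:ℝ))]
    simp only [sFactor, if_pos (show 0 < m ∧ 0 < n from ⟨hm', hn'⟩)]
    rw [hdm, hdn, h3]
    simp only [map_div₀, map_one, map_mul, Complex.conj_I, Complex.conj_ofReal]
    field_simp
    ring_nf
    norm_cast

lemma core_sin (m n : ℤ) (hm : m ≠ 0) (hn : n ≠ 0) :
    -(((|m| : ℤ) : ℂ)) * ((n:ℂ) / (2 * dcoef n)) * (starRingEnd ℂ) (1 / dcoef m)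
      = -Complex.I * sFactor m n * (1 / 2 : ℂ) * ((Real.sqrt |((m * n : ℤ) : ℝ)| : ℝ) : ℂ) := by
  have h := core_cos m n hm hn
  linear_combination (-Complex.I) * h +
    (-(((|m| : ℤ) : ℂ)) * ((n:ℂ) / (2 * dcoef n)) * (starRingEnd ℂ) (1 / dcoef m)) * Complex.I_sq

/-- Matrix coefficients of the actions of the trigonometric vector fields
`X_l(θ) = cos(lθ)` and `Y_k(θ) = sin(kθ)` on `H` in the basis `ẽ_n`:
`(X_l.ẽ_n, ẽ_m)_ω = s(m,n)·(1/2)·√|mn|·(δ_{m−n,l} + δ_{n−m,l})` and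
`(Y_k.ẽ_n, ẽ_m)_ω = (−i)·s(m,n)·(1/2)·√|mn|·(δ_{m−n,k} − δ_{n−m,k})`. -/
theorem trig_field_matrix_entries (l k : ℤ) (hl : 1 ≤ l) (hk : 1 ≤ k)
    (m n : ℤ) (hm : m ≠ 0) (hn : n ≠ 0) :
    ipOmega (fieldAct (fun θ => Real.cos ((l : ℝ) * θ)) (etld n)) (etld m)
      = sFactor m n * (1 / 2 : ℂ) * (Real.sqrt |((m * n : ℤ) : ℝ)| : ℝ) *
        ((if m - n = l then (1:ℂ) else 0) + (if n - m = l then (1:ℂ) else 0)) ∧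
    ipOmega (fieldAct (fun θ => Real.sin ((k : ℝ) * θ)) (etld n)) (etld m)
      = (-Complex.I) * sFactor m n * (1 / 2 : ℂ) * (Real.sqrt |((m * n : ℤ) : ℝ)| : ℝ) *
        ((if m - n = k then (1:ℂ) else 0) - (if n - m = k then (1:ℂ) else 0)) := by
  constructor
  · -- cosine part
    have hprodc : ∀ θ : ℝ, deriv (etld n) θ * ((Real.cos ((l:ℝ)*θ) : ℝ) : ℂ)
        = (Complex.I * n / (2 * dcoef n)) * E (n+l) θ
          + (Complex.I * n / (2 * dcoef n)) * E (n-l) θ := by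
      intro θ
      have e1 : E n θ * E l θ = E (n+l) θ := E_add n l θ
      have e2 : E n θ * E (-l) θ = E (n-l) θ := by rw [E_add, ← sub_eq_add_neg]
      rw [deriv_etld, cos_E, ← e1, ← e2]
      ring
    rw [master _ n m _ _ (n+l) (n-l) hm hprodc]
    rcases eq_or_ne (m-n) l with h1 | h1 <;> rcases eq_or_ne (n-m) l with h2 | h2
    · omega
    · rw [if_pos (show n+l = m by omega), if_neg (show ¬ n-l = m by omega),
        if_pos h1, if_neg h2]
      linear_combination core_cos m n hm hn
    · rw [if_neg (show ¬ n+l = m by omega), if_pos (show n-l = m by omega),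
        if_neg h1, if_pos h2]
      linear_combination core_cos m n hm hn
    · rw [if_neg (show ¬ n+l = m by omega), if_neg (show ¬ n-l = m by omega),
        if_neg h1, if_neg h2]
      ring
  · -- sine part
    have hprods : ∀ θ : ℝ, deriv (etld n) θ * ((Real.sin ((k:ℝ)*θ) : ℝ) : ℂ)
        = ((n:ℂ) / (2 * dcoef n)) * E (n+k) θ
          + (-((n:ℂ) / (2 * dcoef n))) * E (n-k) θ := by
      intro θ
      have e1 : E n θ * E k θ = E (n+k) θ := E_add n k θ
      have e2 : E n θ * E (-k) θ = E (n-k) θ := by rw [E_add, ← sub_eq_add_neg]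
      rw [deriv_etld, sin_E, ← e1, ← e2]
      field_simp [Complex.I_ne_zero, dcoef_ne_zero n hn]
      ring
    rw [master _ n m _ _ (n+k) (n-k) hm hprods]
    rcases eq_or_ne (m-n) k with h1 | h1 <;> rcases eq_or_ne (n-m) k with h2 | h2
    · omega
    · rw [if_pos (show n+k = m by omega), if_neg (show ¬ n-k = m by omega),
        if_pos h1, if_neg h2]
      linear_combination core_sin m n hm hn
    · rw [if_neg (show ¬ n+k = m by omega), if_pos (show n-k = m by omega),
        if_neg h1, if_pos h2]
      linear_combination (-1 : ℂ) * core_sin m n hm hn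
    · rw [if_neg (show ¬ n+k = m by omega), if_neg (show ¬ n-k = m by omega),
        if_neg h1, if_neg h2]
      ring
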